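/- The bound Pr[Ω ∩ ¬T] ≤ 1/(1 - ε + n·ε) is tight: for every n ≥ 1 and 0 < ε < 1 there exists a probability distribution p on {0,1}^n such that with α = Pr[all X_i = 1] = (1-ε)/(1-ε+nε) and β_j = Pr[X_j = 0, X_i = 1 ∀ i ≠ j] = ε/(1-ε+nε) for every j, one has (1/n)·Σ_{j=1}^n Pr[Ω_j] = 1/(1-ε+nε) and Pr[X_j = 1 | Ω_j] = 1 - ε for all j. -/

import Mathlib

open Finset

/-- `Pr[Ω_j]`: the probability that all boxes except possibly `j` pass. -/
def prOmega (n : ℕ) (p : (Fin n → Bool) → ℝ) (j : Fin n) : ℝ :=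
  ∑ x ∈ univ.filter (fun x : Fin n → Bool => ∀ i, i ≠ j → x i = true), p x

/-- `Pr[all boxes pass]`. -/
def prAll (n : ℕ) (p : (Fin n → Bool) → ℝ) : ℝ :=
  ∑ x ∈ univ.filter (fun x : Fin n → Bool => ∀ i, x i = true), p x

/-- Tightness of the cut-and-choose bound: for every `n ≥ 1` and `0 < ε < 1` there is a
distribution with `Pr[all pass] = (1-ε)/(1-ε+nε)`, each `β_j = ε/(1-ε+nε)`,
`(1/n)·Σ_j Pr[Ω_j] = 1/(1-ε+nε)` and `Pr[X_j = 1 | Ω_j] = 1 - ε` for all `j`. -/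
theorem cut_and_choose_bound_tight (n : ℕ) (hn : 1 ≤ n) (ε : ℝ) (hε0 : 0 < ε) (hε1 : ε < 1) :
    ∃ p : (Fin n → Bool) → ℝ, (∀ x, 0 ≤ p x) ∧ (∑ x, p x = 1) ∧
      prAll n p = (1 - ε) / (1 - ε + n * ε) ∧
      (∀ j, prOmega n p j - prAll n p = ε / (1 - ε + n * ε)) ∧
      (1 / (n : ℝ)) * ∑ j : Fin n, prOmega n p j = 1 / (1 - ε + n * ε) ∧
      (∀ j, prAll n p / prOmega n p j = 1 - ε) := by
  set D : ℝ := 1 - ε + n * ε with hDdef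
  have hD : 0 < D := by
    have : (0:ℝ) < n * ε := mul_pos (by exact_mod_cast Nat.pos_of_ne_zero (by omega)) hε0
    nlinarith
  set ones : Fin n → Bool := fun _ => true with hones
  set upd : Fin n → (Fin n → Bool) := fun j => Function.update ones j false with hupd
  have hupd_self : ∀ j, upd j j = false := fun j => Function.update_self j false ones
  have hupd_ne : ∀ j k, k ≠ j → upd j k = true := fun j k hk => by
    simp [hupd, Function.update_of_ne hk, hones]
  have hones_ne_upd : ∀ j, ones ≠ upd j := by
    intro j h
    have := congrFun h j
    simp [hones, hupd_self] at this
  have hupd_inj : ∀ j k, upd j = upd k ↔ j = k := by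
    intro j k
    constructor
    · intro h
      by_contra hne
      have := congrFun h k
      rw [hupd_self, hupd_ne j k (fun h' => hne h'.symm)] at this
      exact Bool.noConfusion this
    · rintro rfl; rfl
  set p : (Fin n → Bool) → ℝ := fun x =>
    (1 - ε)/D * (if x = ones then 1 else 0) + ε/D * ∑ k, (if x = upd k then (1:ℝ) else 0)
    with hp
  have hnonneg : ∀ x, 0 ≤ p x := by
    intro x
    apply add_nonneg
    · apply mul_nonneg (div_nonneg (by linarith) hD.le)
      split <;> norm_num
    · apply mul_nonneg (div_nonneg hε0.le hD.le)
      apply Finset.sum_nonneg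
      intro k _; split <;> norm_num
  have hpones : p ones = (1 - ε)/D := by
    have : ∀ k : Fin n, (if ones = upd k then (1:ℝ) else 0) = 0 := by
      intro k; rw [if_neg (hones_ne_upd k)]
    simp only [hp]
    rw [Finset.sum_congr rfl (fun k _ => this k)]
    simp
  have hpupd : ∀ j, p (upd j) = ε/D := by
    intro j
    have h1 : (if upd j = ones then (1:ℝ) else 0) = 0 := by
      rw [if_neg (fun h => hones_ne_upd j h.symm)]
    have h2 : ∑ k, (if upd j = upd k then (1:ℝ) else 0) = 1 := by
      rw [Finset.sum_congr rfl (fun k _ => if_congr (hupd_inj j k) rfl rfl)]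
      simp
    simp only [hp]
    rw [h1, h2]
    ring
  -- total sum
  have hsum : ∑ x, p x = 1 := by
    rw [hp]
    rw [Finset.sum_add_distrib, ← Finset.mul_sum, ← Finset.mul_sum]
    rw [Finset.sum_ite_eq' univ ones (fun _ => (1:ℝ))]
    rw [Finset.sum_comm]
    have : ∀ k : Fin n, ∑ x : Fin n → Bool, (if x = upd k then (1:ℝ) else 0) = 1 := by
      intro k
      rw [Finset.sum_ite_eq' univ (upd k) (fun _ => (1:ℝ))]
      simp
    rw [Finset.sum_congr rfl (fun k _ => this k)]
    simp only [Finset.mem_univ, if_true, mul_one, Finset.sum_const, Finset.card_univ,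
      Fintype.card_fin, nsmul_eq_mul]
    field_simp
    ring
  -- prAll
  have hAll : prAll n p = (1 - ε)/D := by
    have hfilt : (univ.filter (fun x : Fin n → Bool => ∀ i, x i = true)) = {ones} := by
      ext x
      simp only [mem_filter, mem_univ, true_and, mem_singleton]
      constructor
      · intro h; funext i; simp [h i, hones]
      · rintro rfl i; rfl
    rw [prAll, hfilt, Finset.sum_singleton, hpones]
  -- prOmega
  have hOm : ∀ j, prOmega n p j = 1/D := by
    intro j
    have hfilt : (univ.filter (fun x : Fin n → Bool => ∀ i, i ≠ j → x i = true))
        = {ones, upd j} := by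
      ext x
      simp only [mem_filter, mem_univ, true_and, mem_insert, mem_singleton]
      constructor
      · intro h
        cases hxj : x j with
        | false =>
          right; funext i
          by_cases hi : i = j
          · subst hi; rw [hxj, hupd_self]
          · rw [h i hi, hupd_ne j i hi]
        | true =>
          left; funext i
          by_cases hi : i = j
          · subst hi; rw [hxj]
          · rw [h i hi]
      · intro h i hi
        rcases h with rfl | rfl
        · rfl
        · exact hupd_ne j i hi
    rw [prOmega, hfilt, Finset.sum_pair (hones_ne_upd j), hpones, hpupd]
    field_simp
    ring
  refine ⟨p, hnonneg, hsum, hAll, ?_, ?_, ?_⟩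
  · intro j; rw [hOm j, hAll]; field_simp; ring
  · rw [Finset.sum_congr rfl (fun j _ => hOm j)]
    simp only [Finset.sum_const, Finset.card_univ, Fintype.card_fin, nsmul_eq_mul]
    have hn0 : (n:ℝ) ≠ 0 := by exact_mod_cast Nat.pos_of_ne_zero (by omega) |>.ne'
    field_simp
  · intro j; rw [hOm j, hAll]
    field_simp
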